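/- Let ζ₀ be a zero of ω_m with ζ₀ ∉ {z_{ν+1},…,z_λ}, D(ζ₀) ≠ 0, and |ζ₀| < |z_{ν+1}|. Then along n ∈ Λ_m the error r(ζ₀) − π_{n,λ−1}(ζ₀) = ζ₀^{n+λ}/(D(ζ₀)·V_{n+λ}(ζ₀)) tends to 0 as n → ∞. -/

import Mathlib

open Polynomial Finset Filter Topology

theorem stmt7 (lam nu sig mm : ℕ) (hnu1 : 1 < nu) (hnul : nu + 1 < lam)
    (hsig : nu ≤ sig) (hmm : mm < sig)
    (z Cc : Fin lam → ℂ) (hz : Function.Injective z)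
    (hC : ∀ j, Cc j ≠ 0)
    (hmod : ∀ j : Fin lam, (j : ℕ) < nu →
      ‖z j‖ = ‖z ⟨0, by omega⟩‖)
    (hroot : ∀ j : Fin lam, (j : ℕ) < nu → z j ^ sig = z ⟨0, by omega⟩ ^ sig)
    (hdrop : ∀ j : Fin lam, nu ≤ (j : ℕ) →
      ‖z j‖ < ‖z ⟨0, by omega⟩‖)
    (hdrop1 : ∀ j : Fin lam, nu + 1 ≤ (j : ℕ) →
      ‖z j‖ < ‖z ⟨nu, by omega⟩‖)
    (hdrop2 : ∀ j : Fin lam, nu + 1 ≤ (j : ℕ) →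
      ‖z j‖ ≤ ‖z ⟨nu + 1, hnul⟩‖)
    (ζ₀ : ℂ) (hζ : ∀ j : Fin lam, nu ≤ (j : ℕ) → ζ₀ ≠ z j)
    (habs : ‖ζ₀‖ < ‖z ⟨nu, by omega⟩‖) :
    let D : Polynomial ℂ := ∏ i, (Polynomial.X - Polynomial.C (z i))
    let Dj : Fin lam → Polynomial ℂ :=
      fun j => ∏ i ∈ Finset.univ.erase j, (Polynomial.X - Polynomial.C (z i))
    let V : ℕ → Polynomial ℂ := fun k => ∑ j, Polynomial.C (Cc j * z j ^ k) * Dj j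
    let dom : Finset (Fin lam) := Finset.univ.filter (fun j => (j : ℕ) < nu)
    let ω : Polynomial ℂ := ∑ k ∈ dom, Polynomial.C (Cc k * z k ^ mm) *
      ∏ i ∈ dom.erase k, (Polynomial.X - Polynomial.C (z i))
    let Λ : Filter ℕ := atTop ⊓ Filter.principal {n | (n + lam) % sig = mm % sig}
    ω.eval ζ₀ = 0 → D.eval ζ₀ ≠ 0 →
    Tendsto (fun n : ℕ => ζ₀ ^ (n + lam) / (D.eval ζ₀ * (V (n + lam)).eval ζ₀)) Λ (𝓝 0) := by
  intro D Dj V dom ω Λ hω hD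
  have hνlam : nu < lam := by omega
  set jν : Fin lam := ⟨nu, hνlam⟩ with hjνdef
  set j0 : Fin lam := ⟨0, by omega⟩ with hj0def
  have habs' : ‖ζ₀‖ < ‖z jν‖ := habs
  have hzνpos : 0 < ‖z jν‖ := lt_of_le_of_lt (norm_nonneg _) habs'
  have hzν : z jν ≠ 0 := by
    intro hzero
    rw [hzero] at hzνpos
    simp at hzνpos
  have hDval : D.eval ζ₀ = ∏ i, (ζ₀ - z i) := by simp [D, eval_prod]
  have hfac : ∀ i, ζ₀ - z i ≠ 0 := by
    intro i hzero
    exact hD (by rw [hDval]; exact Finset.prod_eq_zero (mem_univ i) hzero)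
  have hDjζ : ∀ j, (Dj j).eval ζ₀ = ∏ i ∈ univ.erase j, (ζ₀ - z i) := fun j => by
    simp [Dj, eval_prod]
  have hDjne : ∀ j, (Dj j).eval ζ₀ ≠ 0 := fun j => by
    rw [hDjζ]; exact Finset.prod_ne_zero_iff.mpr (fun i _ => hfac i)
  set T : Finset (Fin lam) := univ.filter (fun j => ¬ (j : ℕ) < nu) with hT
  have hjνT : jν ∈ T := by simp [hT, hjνdef]
  set T' : Finset (Fin lam) := T.erase jν with hT'
  have hT'mem : ∀ j ∈ T', nu + 1 ≤ (j : ℕ) := by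
    intro j hj
    rw [hT', Finset.mem_erase, hT, Finset.mem_filter] at hj
    have hne : (j : ℕ) ≠ nu := fun h => hj.1 (Fin.ext h)
    omega
  set a : ℂ := Cc jν * (Dj jν).eval ζ₀ with ha
  have hane : a ≠ 0 := mul_ne_zero (hC _) (hDjne _)
  set h : ℕ → ℂ := fun k => ∑ j ∈ T', Cc j * (z j / z jν) ^ k * (Dj j).eval ζ₀ with hhdef
  set F : ℕ → ℂ := fun k => (ζ₀ / z jν) ^ k / (D.eval ζ₀ * (a + h k)) with hFdef
  -- key algebraic identity
  have hVk : ∀ k : ℕ, k % sig = mm → (V k).eval ζ₀ = z jν ^ k * (a + h k) := by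
    intro k hk
    have hVval : (V k).eval ζ₀ = ∑ j, Cc j * z j ^ k * (Dj j).eval ζ₀ := by
      simp [V, eval_finset_sum]
    rw [hVval, ← Finset.sum_filter_add_sum_filter_not (Finset.univ : Finset (Fin lam)) (fun j => (j : ℕ) < nu) (fun j => Cc j * z j ^ k * (Dj j).eval ζ₀)]
    have hdomfilter : univ.filter (fun j : Fin lam => (j : ℕ) < nu) = dom := rfl
    rw [hdomfilter]
    have hzero : ∑ j ∈ dom, Cc j * z j ^ k * (Dj j).eval ζ₀ = 0 := by
      have hsplit : ∀ j ∈ dom, (Dj j).eval ζ₀ =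
          (∏ i ∈ dom.erase j, (ζ₀ - z i)) * ∏ i ∈ T, (ζ₀ - z i) := by
        intro j hj
        have hjlt : (j : ℕ) < nu := by simpa [dom] using hj
        rw [hDjζ, ← Finset.prod_filter_mul_prod_filter_not (univ.erase j)
          (fun i => (i : ℕ) < nu)]
        congr 1
        · apply Finset.prod_congr _ (fun _ _ => rfl)
          ext i
          simp only [Finset.mem_filter, Finset.mem_erase, Finset.mem_univ, true_and, dom,
            and_true]
          try tauto
        · apply Finset.prod_congr _ (fun _ _ => rfl)
          ext i
          simp only [Finset.mem_filter, Finset.mem_erase, Finset.mem_univ, true_and, hT]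
          constructor
          · exact fun hi => hi.2
          · exact fun hi => ⟨⟨fun e => hi (by rw [e]; exact hjlt), trivial⟩, hi⟩
      have hpow : ∀ j ∈ dom, z j ^ k = (z j0 ^ sig) ^ (k / sig) * z j ^ mm := by
        intro j hj
        have hjlt : (j : ℕ) < nu := by simpa [dom] using hj
        have hkeq : k = sig * (k / sig) + mm := by
          have := Nat.div_add_mod k sig
          omega
        calc z j ^ k = z j ^ (sig * (k / sig) + mm) := by rw [← hkeq]
          _ = (z j ^ sig) ^ (k / sig) * z j ^ mm := by rw [pow_add, pow_mul]
          _ = (z j0 ^ sig) ^ (k / sig) * z j ^ mm := by rw [hroot j hjlt]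
      calc ∑ j ∈ dom, Cc j * z j ^ k * (Dj j).eval ζ₀
          = ∑ j ∈ dom, (z j0 ^ sig) ^ (k / sig) * (∏ i ∈ T, (ζ₀ - z i)) *
              (Cc j * z j ^ mm * ∏ i ∈ dom.erase j, (ζ₀ - z i)) := by
            refine Finset.sum_congr rfl fun j hj => ?_
            rw [hpow j hj, hsplit j hj]; ring
        _ = (z j0 ^ sig) ^ (k / sig) * (∏ i ∈ T, (ζ₀ - z i)) *
              ∑ j ∈ dom, Cc j * z j ^ mm * ∏ i ∈ dom.erase j, (ζ₀ - z i) := by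
            rw [Finset.mul_sum]
        _ = (z j0 ^ sig) ^ (k / sig) * (∏ i ∈ T, (ζ₀ - z i)) * ω.eval ζ₀ := by
            congr 1
            simp [ω, eval_finset_sum, eval_prod]
        _ = 0 := by rw [hω, mul_zero]
    rw [hzero, zero_add]
    have hsplitT : ∑ j ∈ univ.filter (fun j : Fin lam => ¬ (j : ℕ) < nu),
        Cc j * z j ^ k * (Dj j).eval ζ₀
        = Cc jν * z jν ^ k * (Dj jν).eval ζ₀ +
          ∑ j ∈ T', Cc j * z j ^ k * (Dj j).eval ζ₀ :=
      (Finset.add_sum_erase T _ hjνT).symm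
    rw [hsplitT, mul_add, hhdef, Finset.mul_sum]
    congr 1
    · rw [ha]; ring
    · refine Finset.sum_congr rfl fun j hj => ?_
      have hzk : z jν ^ k ≠ 0 := pow_ne_zero _ hzν
      rw [div_pow]
      first
      | (field_simp; ring)
      | field_simp
      | (field_simp; ring_nf)
  -- the limit of F
  have hF : Tendsto F atTop (𝓝 0) := by
    have hnum : Tendsto (fun k : ℕ => (ζ₀ / z jν) ^ k) atTop (𝓝 0) := by
      apply tendsto_pow_atTop_nhds_zero_of_norm_lt_one
      rw [norm_div]
      exact (div_lt_one hzνpos).mpr habs'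
    have hhz : Tendsto h atTop (𝓝 0) := by
      have hsum : Tendsto (fun k : ℕ => ∑ j ∈ T', Cc j * (z j / z jν) ^ k * (Dj j).eval ζ₀)
          atTop (𝓝 (∑ j ∈ T', Cc j * 0 * (Dj j).eval ζ₀)) := by
        refine tendsto_finset_sum _ fun j hj => ?_
        have hlt : ‖z j‖ < ‖z jν‖ := hdrop1 j (hT'mem j hj)
        have hterm : Tendsto (fun k : ℕ => (z j / z jν) ^ k) atTop (𝓝 0) := by
          apply tendsto_pow_atTop_nhds_zero_of_norm_lt_one
          rw [norm_div]
          exact (div_lt_one hzνpos).mpr hlt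
        exact (hterm.const_mul _).mul_const _
      simpa [hhdef] using hsum
    have hden : Tendsto (fun k => D.eval ζ₀ * (a + h k)) atTop (𝓝 (D.eval ζ₀ * (a + 0))) :=
      tendsto_const_nhds.mul (tendsto_const_nhds.add hhz)
    have hdne : D.eval ζ₀ * (a + 0) ≠ 0 := by
      rw [add_zero]; exact mul_ne_zero hD hane
    have := hnum.div hden hdne
    simpa [hFdef, Pi.div_def] using this
  have hcomp : Tendsto (fun n : ℕ => F (n + lam)) Λ (𝓝 0) :=
    (hF.comp (tendsto_add_atTop_nat lam)).mono_left inf_le_left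
  refine hcomp.congr' ?_
  have : Λ = atTop ⊓ Filter.principal {n | (n + lam) % sig = mm % sig} := rfl
  rw [this]
  refine Filter.eventually_inf_principal.mpr (Filter.Eventually.of_forall fun n hn => ?_)
  have hk : (n + lam) % sig = mm := by
    rwa [Nat.mod_eq_of_lt hmm] at hn
  show F (n + lam) = ζ₀ ^ (n + lam) / (Polynomial.eval ζ₀ D * Polynomial.eval ζ₀ (V (n + lam)))
  rw [hVk _ hk, hFdef]
  simp only
  rw [div_pow, div_div, mul_left_comm]
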